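/- Let Ω be a nonempty closed convex subset of ℝˢ and let x̄ ∈ Ω. Then the subdifferential of the distance function d(·;Ω) at x̄ equals N(x̄;Ω) ∩ 𝔹, the intersection of the normal cone to Ω at x̄ with the closed unit ball; that is, a vector v satisfies ⟨v, x − x̄⟩ ≤ d(x;Ω) − d(x̄;Ω) for all x ∈ ℝˢ if and only if ‖v‖ ≤ 1 and ⟨v, x − x̄⟩ ≤ 0 for all x ∈ Ω. -/

import Mathlib

/-- Proposition 2.2, case `xbar ∈ Ω`: the subdifferential of the distance function
`d(·; Ω)` at `xbar` equals `N(xbar; Ω) ∩ 𝔹`, the intersection of the normal cone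
with the closed unit ball. -/
theorem subdiff_infDist_of_mem {s : ℕ}
    (Ω : Set (EuclideanSpace ℝ (Fin s)))
    (hne : Ω.Nonempty) (hcl : IsClosed Ω) (hcv : Convex ℝ Ω)
    (xbar : EuclideanSpace ℝ (Fin s)) (hxbar : xbar ∈ Ω) :
    ∀ v : EuclideanSpace ℝ (Fin s),
      (∀ x, (inner ℝ v (x - xbar) : ℝ) ≤ Metric.infDist x Ω - Metric.infDist xbar Ω) ↔
        (‖v‖ ≤ 1 ∧ ∀ x ∈ Ω, (inner ℝ v (x - xbar) : ℝ) ≤ 0) := by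
  have hdbar : Metric.infDist xbar Ω = 0 := by
    rw [Metric.infDist_zero_of_mem hxbar]
  intro v
  constructor
  · intro h
    constructor
    · have h1 := h (xbar + v)
      simp only [add_sub_cancel_left, hdbar, sub_zero] at h1
      have h2 : Metric.infDist (xbar + v) Ω ≤ ‖v‖ := by
        calc Metric.infDist (xbar + v) Ω ≤ dist (xbar + v) xbar :=
              Metric.infDist_le_dist_of_mem hxbar
          _ = ‖v‖ := by simp [dist_eq_norm]
      have h3 : ‖v‖ ^ 2 ≤ ‖v‖ := by
        rw [← real_inner_self_eq_norm_sq]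
        exact h1.trans h2
      nlinarith [norm_nonneg v]
    · intro x hx
      have h1 := h x
      rw [Metric.infDist_zero_of_mem hx, hdbar] at h1
      simpa using h1
  · rintro ⟨hv1, hv2⟩ x
    rw [hdbar, sub_zero]
    obtain ⟨y, hy, hdy⟩ := hcl.exists_infDist_eq_dist hne x
    have : (inner ℝ v (x - xbar) : ℝ) = inner ℝ v (x - y) + inner ℝ v (y - xbar) := by
      rw [← inner_add_right]
      congr 1
      abel
    rw [this, hdy, dist_eq_norm]
    have h1 : (inner ℝ v (x - y) : ℝ) ≤ ‖v‖ * ‖x - y‖ := real_inner_le_norm v _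
    have h2 : (inner ℝ v (y - xbar) : ℝ) ≤ 0 := hv2 y hy
    nlinarith [norm_nonneg (x - y)]
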